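/- arXiv:2401.10587 — 2 statements merged into one kernel-verified Lean document; each statement's English description precedes it below -/
import Mathlib

section
/- Let C be a fusion category over a field k. Then for every simple object S of C, the left dimension dim_l(S) and the right dimension dim_r(S) are nonzero elements of End_C(𝟙) = k. -/
open CategoryTheory MonoidalCategory CategoryTheory.Limits

universe v u

namespace Enc

variable {C : Type u} [Category.{v} C] [MonoidalCategory C] [RightRigidCategory C]

/-- The canonical morphism `Yᘁ ⊗ Xᘁ ⟶ (X ⊗ Y)ᘁ`. -/
noncomputable def dualTensorCompare (X Y : C) : Yᘁ ⊗ Xᘁ ⟶ (X ⊗ Y)ᘁ :=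
  (ρ_ (Yᘁ ⊗ Xᘁ)).inv ≫ ((Yᘁ ⊗ Xᘁ) ◁ η_ (X ⊗ Y) ((X ⊗ Y)ᘁ)) ≫
    (α_ (Yᘁ ⊗ Xᘁ) (X ⊗ Y) ((X ⊗ Y)ᘁ)).inv ≫
    (((α_ (Yᘁ) (Xᘁ) (X ⊗ Y)).hom ≫
        ((Yᘁ) ◁ ((α_ (Xᘁ) X Y).inv ≫ (ε_ X (Xᘁ) ▷ Y) ≫ (λ_ Y).hom)) ≫
        ε_ Y (Yᘁ)) ▷ ((X ⊗ Y)ᘁ)) ≫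
    (λ_ ((X ⊗ Y)ᘁ)).hom

/-- The canonical morphism `(X ⊗ Y)ᘁ ⟶ Yᘁ ⊗ Xᘁ`. -/
noncomputable def tensorDualCompare (X Y : C) : (X ⊗ Y)ᘁ ⟶ Yᘁ ⊗ Xᘁ :=
  (ρ_ ((X ⊗ Y)ᘁ)).inv ≫
    (((X ⊗ Y)ᘁ) ◁ (η_ X (Xᘁ) ≫ (((ρ_ X).inv ≫ (X ◁ η_ Y (Yᘁ)) ≫ (α_ X Y (Yᘁ)).inv) ▷ (Xᘁ)) ≫
        (α_ (X ⊗ Y) (Yᘁ) (Xᘁ)).hom)) ≫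
    (α_ ((X ⊗ Y)ᘁ) (X ⊗ Y) ((Yᘁ) ⊗ (Xᘁ))).inv ≫
    (ε_ (X ⊗ Y) ((X ⊗ Y)ᘁ) ▷ ((Yᘁ) ⊗ (Xᘁ))) ≫ (λ_ ((Yᘁ) ⊗ (Xᘁ))).hom

/-- The canonical morphism `(Xᘁ)ᘁ ⊗ (Yᘁ)ᘁ ⟶ ((X ⊗ Y)ᘁ)ᘁ`. -/
noncomputable def doubleDualCompare (X Y : C) : ((Xᘁ)ᘁ) ⊗ ((Yᘁ)ᘁ) ⟶ ((X ⊗ Y)ᘁ)ᘁ :=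
  dualTensorCompare (Yᘁ) (Xᘁ) ≫ (tensorDualCompare X Y)ᘁ

/-- A pivotal structure on a (right) rigid monoidal category: a monoidal natural
isomorphism `X ≅ (Xᘁ)ᘁ`. -/
structure PivotalStructure (C : Type u) [Category.{v} C] [MonoidalCategory C]
    [RightRigidCategory C] where
  φ : ∀ X : C, X ≅ ((Xᘁ)ᘁ)
  naturality : ∀ {X Y : C} (f : X ⟶ Y), f ≫ (φ Y).hom = (φ X).hom ≫ ((fᘁ)ᘁ)
  monoidal : ∀ X Y : C,
    (φ (X ⊗ Y)).hom = ((φ X).hom ⊗ₘ (φ Y).hom) ≫ doubleDualCompare X Y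

variable (P : PivotalStructure C)

/-- Right evaluation `ev'_X : X ⊗ Xᘁ ⟶ 𝟙`. -/
noncomputable def ev' (X : C) : X ⊗ (Xᘁ) ⟶ 𝟙_ C :=
  ((P.φ X).hom ▷ (Xᘁ)) ≫ ε_ (Xᘁ) ((Xᘁ)ᘁ)

/-- Right coevaluation `coev'_X : 𝟙 ⟶ Xᘁ ⊗ X`. -/
noncomputable def coev' (X : C) : 𝟙_ C ⟶ (Xᘁ) ⊗ X :=
  η_ (Xᘁ) ((Xᘁ)ᘁ) ≫ ((Xᘁ) ◁ (P.φ X).inv)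

/-- Left trace of an endomorphism. -/
noncomputable def trl {X : C} (g : X ⟶ X) : 𝟙_ C ⟶ 𝟙_ C :=
  coev' P X ≫ ((Xᘁ) ◁ g) ≫ ε_ X (Xᘁ)

/-- Right trace of an endomorphism. -/
noncomputable def trr {X : C} (g : X ⟶ X) : 𝟙_ C ⟶ 𝟙_ C :=
  η_ X (Xᘁ) ≫ (g ▷ (Xᘁ)) ≫ ev' P X

/-- Left dimension of an object. -/
noncomputable def diml (X : C) : 𝟙_ C ⟶ 𝟙_ C := trl P (𝟙 X)

/-- Right dimension of an object. -/
noncomputable def dimr (X : C) : 𝟙_ C ⟶ 𝟙_ C := trr P (𝟙 X)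

section Fusion

universe u'

/-- An object `S` is simple if its endomorphism space is one-dimensional over `k`. -/
def IsSimpleObj (k : Type u') [Field k] {D : Type u} [Category.{v} D] [Preadditive D]
    [Linear k D] (S : D) : Prop :=
  Module.finrank k (S ⟶ S) = 1

/-- The defining conditions of a fusion category: `D` (an additive `k`-linear pivotal
category) is fusion if every object is a finite direct sum of simple objects, Hom spaces
between non-isomorphic simple objects vanish, the unit object is simple, and there are
finitely many isomorphism classes of simple objects. -/
structure IsFusion (k : Type u') [Field k] (D : Type u) [Category.{v} D]
    [MonoidalCategory D] [Preadditive D] [Linear k D] [HasFiniteBiproducts D] : Prop where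
  sum_of_simples : ∀ X : D, ∃ (n : ℕ) (f : Fin n → D),
    (∀ i, IsSimpleObj k (f i)) ∧ Nonempty (X ≅ ⨁ f)
  hom_vanish : ∀ S S' : D, IsSimpleObj k S → IsSimpleObj k S' →
    ¬ Nonempty (S ≅ S') → ∀ f : S ⟶ S', f = 0
  unit_simple : IsSimpleObj k (𝟙_ D)
  finitely_many : ∃ (n : ℕ) (f : Fin n → D),
    ∀ S : D, IsSimpleObj k S → ∃ i, Nonempty (S ≅ f i)

/-- A pivotal category is spherical if left and right traces coincide. -/
def IsSpherical {D : Type u} [Category.{v} D] [MonoidalCategory D] [RightRigidCategory D]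
    (P : PivotalStructure D) : Prop :=
  ∀ (X : D) (g : X ⟶ X), trl P g = trr P g

/-- A representative set of simple objects: a finite family of pairwise non-isomorphic
simple objects, containing the unit object (up to isomorphism), such that every simple
object is isomorphic to (exactly) one member of the family. -/
structure IsRepresentativeSet (k : Type u') [Field k] {D : Type u} [Category.{v} D]
    [MonoidalCategory D] [Preadditive D] [Linear k D] {n : ℕ} (obj : Fin n → D) :
    Prop where
  simple : ∀ i, IsSimpleObj k (obj i)
  unit_mem : ∃ i, Nonempty (obj i ≅ 𝟙_ D)
  covers : ∀ S : D, IsSimpleObj k S → ∃ i, Nonempty (S ≅ obj i)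
  distinct : ∀ i j, Nonempty (obj i ≅ obj j) → i = j

variable (k : Type u') [Field k]
variable [Preadditive C] [Linear k C] [MonoidalPreadditive C] [MonoidalLinear k C]
  [HasFiniteBiproducts C]

/-- In a simple object, the identity is nonzero. -/
lemma isSimpleObj_id_ne_zero {S : C} (hS : IsSimpleObj k S) : 𝟙 S ≠ 0 := by
  intro h
  have hz : ∀ f : S ⟶ S, f = 0 := fun f => by rw [← Category.comp_id f, h, comp_zero]
  have : Subsingleton (S ⟶ S) := ⟨fun f g => by rw [hz f, hz g]⟩
  have h0 := Module.finrank_zero_of_subsingleton (R := k) (M := S ⟶ S)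
  rw [hS] at h0
  exact one_ne_zero h0

lemma eps_ne_zero {S : C} (h : 𝟙 S ≠ 0) : ε_ S (Sᘁ) ≠ 0 := by
  intro h0
  apply h
  calc 𝟙 S = (λ_ S).inv ≫ ((λ_ S).hom ≫ (ρ_ S).inv) ≫ (ρ_ S).hom := by simp
  _ = (λ_ S).inv ≫ (η_ S (Sᘁ) ▷ S ≫ (α_ _ _ _).hom ≫ S ◁ ε_ S (Sᘁ)) ≫ (ρ_ S).hom := by
      rw [ExactPairing.evaluation_coevaluation]
  _ = 0 := by rw [h0]; simp

lemma eta_ne_zero {S : C} (h : 𝟙 S ≠ 0) : η_ S (Sᘁ) ≠ 0 := by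
  intro h0
  apply h
  calc 𝟙 S = (λ_ S).inv ≫ ((λ_ S).hom ≫ (ρ_ S).inv) ≫ (ρ_ S).hom := by simp
  _ = (λ_ S).inv ≫ (η_ S (Sᘁ) ▷ S ≫ (α_ _ _ _).hom ≫ S ◁ ε_ S (Sᘁ)) ≫ (ρ_ S).hom := by
      rw [ExactPairing.evaluation_coevaluation]
  _ = 0 := by rw [h0]; simp

lemma id_dual_ne_zero {S : C} (h : 𝟙 S ≠ 0) : 𝟙 (Sᘁ) ≠ 0 := by
  intro h0
  apply eps_ne_zero h
  calc ε_ S (Sᘁ) = (𝟙 (Sᘁ) ▷ S) ≫ ε_ S (Sᘁ) := by simp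
  _ = 0 := by rw [h0]; simp

/-- Nondegeneracy of the composition pairing with the unit object, from semisimplicity. -/
lemma exists_pairing_ne_zero (hfus : IsFusion k C) {Y : C} (a : 𝟙_ C ⟶ Y) (ha : a ≠ 0) :
    ∃ b : Y ⟶ 𝟙_ C, a ≫ b ≠ 0 := by
  obtain ⟨n, f, hsimp, ⟨e⟩⟩ := hfus.sum_of_simples Y
  have ha' : a ≫ e.hom ≠ 0 := by
    intro h
    apply ha
    have := congrArg (· ≫ e.inv) h
    simpa using this
  have hex : ∃ i, (a ≫ e.hom) ≫ biproduct.π f i ≠ 0 := by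
    by_contra h
    push_neg at h
    apply ha'
    have htot : (a ≫ e.hom) ≫ ∑ j, biproduct.π f j ≫ biproduct.ι f j = a ≫ e.hom := by
      rw [biproduct.total, Category.comp_id]
    rw [← htot, Preadditive.comp_sum]
    refine Finset.sum_eq_zero fun j _ => ?_
    rw [← Category.assoc, h j, zero_comp]
  obtain ⟨i, hi⟩ := hex
  have hiso : Nonempty (𝟙_ C ≅ f i) := by
    by_contra hne
    exact hi (hfus.hom_vanish _ _ hfus.unit_simple (hsimp i) hne _)
  obtain ⟨u⟩ := hiso
  refine ⟨e.hom ≫ biproduct.π f i ≫ u.inv, ?_⟩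
  intro h
  apply hi
  have h2 := congrArg (· ≫ u.hom) h
  simp only [Category.assoc, Iso.inv_hom_id, Category.comp_id, zero_comp] at h2
  rw [Category.assoc]
  exact h2

/-- `tensorLeftHomEquiv` as a `k`-linear equivalence. -/
noncomputable def tensorLeftHomLinearEquiv (X Y Y' Z : C) [ExactPairing Y Y'] :
    (Y' ⊗ X ⟶ Z) ≃ₗ[k] (X ⟶ Y ⊗ Z) :=
  { tensorLeftHomEquiv X Y Y' Z with
    map_add' := fun f g => by simp [tensorLeftHomEquiv]
    map_smul' := fun c f => by simp [tensorLeftHomEquiv] }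

/-- `tensorRightHomEquiv` as a `k`-linear equivalence. -/
noncomputable def tensorRightHomLinearEquiv (X Y Y' Z : C) [ExactPairing Y Y'] :
    (X ⊗ Y ⟶ Z) ≃ₗ[k] (X ⟶ Z ⊗ Y') :=
  { tensorRightHomEquiv X Y Y' Z with
    map_add' := fun f g => by simp [tensorRightHomEquiv]
    map_smul' := fun c f => by simp [tensorRightHomEquiv] }

lemma finrank_left_pair (S : C) (hS : IsSimpleObj k S) :
    Module.finrank k ((Sᘁ) ⊗ S ⟶ 𝟙_ C) = 1 := by
  rw [((tensorLeftHomLinearEquiv k S S (Sᘁ) (𝟙_ C)).trans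
    (Linear.homCongr k (Iso.refl S) (ρ_ S))).finrank_eq]
  exact hS

include P in
lemma finrank_right_pair (S : C) (hS : IsSimpleObj k S) :
    Module.finrank k (S ⊗ (Sᘁ) ⟶ 𝟙_ C) = 1 := by
  rw [((tensorRightHomLinearEquiv k S (Sᘁ) ((Sᘁ)ᘁ) (𝟙_ C)).trans
    (Linear.homCongr k (Iso.refl S) ((λ_ ((Sᘁ)ᘁ)) ≪≫ (P.φ S).symm))).finrank_eq]
  exact hS

lemma pair_ne_zero (hfus : IsFusion k C) {Y : C} (a : 𝟙_ C ⟶ Y) (e : Y ⟶ 𝟙_ C)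
    (ha : a ≠ 0) (he : e ≠ 0) (hdim : Module.finrank k (Y ⟶ 𝟙_ C) = 1) :
    a ≫ e ≠ 0 := by
  obtain ⟨b, hb⟩ := exists_pairing_ne_zero k hfus a ha
  obtain ⟨c, hc⟩ := (finrank_eq_one_iff_of_nonzero' e he).mp hdim b
  intro h
  apply hb
  rw [← hc, Linear.comp_smul, h, smul_zero]

/-- in a fusion category, the left and right dimensions of any simple object
are nonzero in `End(𝟙) = k`. -/
theorem simple_dim_ne_zero (hfus : IsFusion k C) (S : C) (hS : IsSimpleObj k S) :
    diml P S ≠ 0 ∧ dimr P S ≠ 0 := by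
  have hid : 𝟙 S ≠ 0 := isSimpleObj_id_ne_zero k hS
  have hiddual : 𝟙 (Sᘁ) ≠ 0 := id_dual_ne_zero hid
  constructor
  · have h1 : diml P S = coev' P S ≫ ε_ S (Sᘁ) := by simp [diml, trl]
    rw [h1]
    apply pair_ne_zero k hfus
    · intro h0
      apply eta_ne_zero hiddual
      have heq : η_ (Sᘁ) ((Sᘁ)ᘁ) = coev' P S ≫ ((Sᘁ) ◁ (P.φ S).hom) := by
        simp [coev', ← MonoidalCategory.whiskerLeft_comp]
      rw [heq, h0, zero_comp]
    · exact eps_ne_zero hid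
    · exact finrank_left_pair k S hS
  · have h1 : dimr P S = η_ S (Sᘁ) ≫ ev' P S := by simp [dimr, trr]
    rw [h1]
    apply pair_ne_zero k hfus
    · exact eta_ne_zero hid
    · intro h0
      apply eps_ne_zero hiddual
      have heq : ε_ (Sᘁ) ((Sᘁ)ᘁ) = ((P.φ S).inv ▷ (Sᘁ)) ≫ ev' P S := by
        simp [ev', ← MonoidalCategory.comp_whiskerRight]
      rw [heq, h0, comp_zero]
    · exact finrank_right_pair (P := P) (k := k) (S := S) hS


end Fusion

end Enc
end

section
/- Let C be a fusion category over a field k. Then C is spherical (i.e., tr_l(g) = tr_r(g) for every endomorphism g in C) if and only if every simple object S of C satisfies dim_l(S) = dim_r(S). -/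
open CategoryTheory MonoidalCategory CategoryTheory.Limits

universe v u

namespace Enc

variable {C : Type u} [Category.{v} C] [MonoidalCategory C] [RightRigidCategory C]

variable (P : PivotalStructure C)

section Fusion

universe u'

variable (k : Type u') [Field k]
variable [Preadditive C] [Linear k C] [MonoidalPreadditive C] [MonoidalLinear k C]
  [HasFiniteBiproducts C]

/-- Left trace is cyclic. -/
theorem trl_comm {X Y : C} (a : X ⟶ Y) (b : Y ⟶ X) :
    trl P (a ≫ b) = trl P (b ≫ a) := by
  have hnat : (P.φ X).inv ≫ a = (rightAdjointMate (rightAdjointMate a)) ≫ (P.φ Y).inv := by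
    rw [Iso.inv_comp_eq, ← Category.assoc, Iso.eq_comp_inv]
    exact P.naturality a
  dsimp only [trl, coev']
  calc _ = η_ (Xᘁ) ((Xᘁ)ᘁ) ≫ ((Xᘁ) ◁ (rightAdjointMate (rightAdjointMate a))) ≫
          ((Xᘁ) ◁ ((P.φ Y).inv ≫ b)) ≫ ε_ X (Xᘁ) := by
        simp only [← MonoidalCategory.whiskerLeft_comp_assoc,
          ← MonoidalCategory.whiskerLeft_comp, Category.assoc]
        rw [show (P.φ X).inv ≫ a ≫ b =
            (rightAdjointMate (rightAdjointMate a)) ≫ (P.φ Y).inv ≫ b from by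
          rw [← Category.assoc, hnat, Category.assoc]]
    _ = η_ (Yᘁ) ((Yᘁ)ᘁ) ≫ ((rightAdjointMate a) ▷ ((Yᘁ)ᘁ)) ≫
          ((Xᘁ) ◁ ((P.φ Y).inv ≫ b)) ≫ ε_ X (Xᘁ) := by
        rw [coevaluation_comp_rightAdjointMate_assoc]
    _ = η_ (Yᘁ) ((Yᘁ)ᘁ) ≫ ((Yᘁ) ◁ ((P.φ Y).inv ≫ b)) ≫
          ((rightAdjointMate a) ▷ X) ≫ ε_ X (Xᘁ) := by
        rw [← whisker_exchange_assoc]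
    _ = η_ (Yᘁ) ((Yᘁ)ᘁ) ≫ ((Yᘁ) ◁ ((P.φ Y).inv ≫ b)) ≫ ((Yᘁ) ◁ a) ≫ ε_ Y (Yᘁ) := by
        rw [rightAdjointMate_comp_evaluation]
    _ = _ := by
        simp only [← MonoidalCategory.whiskerLeft_comp_assoc,
          ← MonoidalCategory.whiskerLeft_comp, Category.assoc]

/-- Right trace is cyclic. -/
theorem trr_comm {X Y : C} (a : X ⟶ Y) (b : Y ⟶ X) :
    trr P (a ≫ b) = trr P (b ≫ a) := by
  have hnat : b ≫ (P.φ X).hom = (P.φ Y).hom ≫ (rightAdjointMate (rightAdjointMate b)) :=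
    P.naturality b
  dsimp only [trr, ev']
  calc _ = η_ X (Xᘁ) ≫ ((a ≫ (P.φ Y).hom) ▷ (Xᘁ)) ≫
          ((rightAdjointMate (rightAdjointMate b)) ▷ (Xᘁ)) ≫ ε_ (Xᘁ) ((Xᘁ)ᘁ) := by
        simp only [← comp_whiskerRight_assoc, ← comp_whiskerRight, Category.assoc, hnat]
    _ = η_ X (Xᘁ) ≫ ((a ≫ (P.φ Y).hom) ▷ (Xᘁ)) ≫
          (((Yᘁ)ᘁ) ◁ (rightAdjointMate b)) ≫ ε_ (Yᘁ) ((Yᘁ)ᘁ) := by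
        rw [rightAdjointMate_comp_evaluation]
    _ = η_ X (Xᘁ) ≫ (X ◁ (rightAdjointMate b)) ≫
          ((a ≫ (P.φ Y).hom) ▷ (Yᘁ)) ≫ ε_ (Yᘁ) ((Yᘁ)ᘁ) := by
        rw [whisker_exchange_assoc]
    _ = η_ Y (Yᘁ) ≫ (b ▷ (Yᘁ)) ≫ ((a ≫ (P.φ Y).hom) ▷ (Yᘁ)) ≫ ε_ (Yᘁ) ((Yᘁ)ᘁ) := by
        rw [coevaluation_comp_rightAdjointMate_assoc]
    _ = _ := by
        simp only [← comp_whiskerRight_assoc, ← comp_whiskerRight, Category.assoc]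

theorem trl_sum {X : C} {J : Type u'} (s : Finset J) (g : J → (X ⟶ X)) :
    trl P (∑ j ∈ s, g j) = ∑ j ∈ s, trl P (g j) := by
  simp [trl, whiskerLeft_sum, Preadditive.comp_sum, Preadditive.sum_comp]

theorem trr_sum {X : C} {J : Type u'} (s : Finset J) (g : J → (X ⟶ X)) :
    trr P (∑ j ∈ s, g j) = ∑ j ∈ s, trr P (g j) := by
  simp [trr, sum_whiskerRight, Preadditive.comp_sum, Preadditive.sum_comp]

theorem trl_smul {X : C} (c : k) (g : X ⟶ X) : trl P (c • g) = c • trl P g := by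
  simp [trl, Linear.comp_smul, Linear.smul_comp]

theorem trr_smul {X : C} (c : k) (g : X ⟶ X) : trr P (c • g) = c • trr P g := by
  simp [trr, Linear.comp_smul, Linear.smul_comp]


/-- a fusion category is spherical if and only if every simple object has
equal left and right dimensions. -/
theorem spherical_iff_simple_dims_eq (hfus : IsFusion k C) :
    IsSpherical P ↔ (∀ S : C, IsSimpleObj k S → diml P S = dimr P S) := by
  constructor
  · intro hs S _
    exact hs S (𝟙 S)
  · intro hd X g
    have key : ∀ (S : C), IsSimpleObj k S → ∀ u : S ⟶ S, trl P u = trr P u := by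
      intro S hS u
      have hone : (𝟙 S) ≠ 0 := by
        intro h0
        have hsub : Subsingleton (S ⟶ S) :=
          ⟨fun f g => by rw [← Category.comp_id f, ← Category.comp_id g, h0, comp_zero, comp_zero]⟩
        rw [IsSimpleObj, Module.finrank_zero_of_subsingleton] at hS
        exact one_ne_zero hS.symm
      obtain ⟨c, hc⟩ := (finrank_eq_one_iff_of_nonzero' (𝟙 S) hone).mp hS u
      have hdim := hd S hS
      dsimp only [diml, dimr] at hdim
      rw [← hc, trl_smul, trr_smul, hdim]
    obtain ⟨n, f, hsimp, ⟨e⟩⟩ := hfus.sum_of_simples X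
    have h1 : trl P g = trl P (e.inv ≫ (g ≫ e.hom)) := by
      rw [trl_comm]
      simp
    have h2 : trr P g = trr P (e.inv ≫ (g ≫ e.hom)) := by
      rw [trr_comm]
      simp
    set h : (⨁ f) ⟶ (⨁ f) := e.inv ≫ (g ≫ e.hom) with hh
    have hdec : h = ∑ j ∈ (Finset.univ : Finset (Fin n)),
        (h ≫ biproduct.π f j) ≫ biproduct.ι f j := by
      conv_lhs => rw [← Category.comp_id h, ← biproduct.total]
      rw [Preadditive.comp_sum]
      simp [Category.assoc]
    rw [h1, h2]
    calc trl P h = ∑ j ∈ (Finset.univ : Finset (Fin n)),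
          trl P ((h ≫ biproduct.π f j) ≫ biproduct.ι f j) := by
          conv_lhs => rw [hdec]
          rw [trl_sum]
      _ = ∑ j ∈ (Finset.univ : Finset (Fin n)),
          trr P ((h ≫ biproduct.π f j) ≫ biproduct.ι f j) := by
          refine Finset.sum_congr rfl fun j _ => ?_
          rw [trl_comm, key (f j) (hsimp j), ← trr_comm]
      _ = trr P h := by
          rw [← trr_sum]
          conv_rhs => rw [hdec]


end Fusion

end Enc
end
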